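/- Every finite chordal graph with at least one vertex has a simplicial vertex, i.e., a vertex v such that the induced subgraph on the neighborhood N(v) is a complete graph. -/

import Mathlib

open SimpleGraph List

variable {V : Type}

/-- `L` is a walk-list from `u` to `v` in `H`. -/
def PathList (H : SimpleGraph V) (u v : V) (L : List V) : Prop :=
  L.head? = some u ∧ L.getLast? = some v ∧ List.Chain' H.Adj L

lemma pathList_splice {H : SimpleGraph V} {u v : V} {L : List V}
    (hL : PathList H u v L) {i j : ℕ} (hij : i < j) (hj : j < L.length)
    (hadj : H.Adj L[i] L[j]) :
    PathList H u v (L.take (i+1) ++ L.drop j) ∧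
      (L.take (i+1) ++ L.drop j).length = i + 1 + (L.length - j) := by
  obtain ⟨h1, h2, h3⟩ := hL
  have hi : i < L.length := lt_trans hij hj
  have hne : L ≠ [] := by rintro rfl; simp at hi
  have hlt : (L.take (i+1)).getLast? = some L[i] := by
    rw [List.getLast?_eq_getElem?]
    rw [List.length_take]
    have : (i + 1) ⊓ L.length = i + 1 := by omega
    rw [this]
    simp only [List.getElem?_take]
    rw [show i+1-1 = i from rfl, if_pos (by omega), List.getElem?_eq_getElem hi]
  have hhd : (L.drop j).head? = some L[j] := by
    rw [List.drop_eq_getElem_cons hj]; rfl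
  refine ⟨⟨?_, ?_, ?_⟩, ?_⟩
  · rw [List.head?_append]
    cases L with
    | nil => simp at hi
    | cons a t => simp at h1; simp [h1]
  · rw [List.getLast?_append]
    have : (L.drop j).getLast? = some v := by
      rw [List.getLast?_eq_getElem?, List.length_drop, List.getElem?_drop]
      have : j + (L.length - j - 1) = L.length - 1 := by omega
      rw [this, ← List.getLast?_eq_getElem?, h2]
    rw [this]; rfl
  · unfold List.Chain'; rw [List.isChain_append]
    refine ⟨h3.take _, h3.drop _, ?_⟩
    intro x hx y hy
    rw [hlt] at hx; rw [hhd] at hy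
    simp only [Option.mem_def, Option.some_inj] at hx hy
    rw [← hx, ← hy]; exact hadj
  · rw [List.length_append, List.length_take, List.length_drop]
    omega

lemma pathList_take {H : SimpleGraph V} {u v : V} {L : List V}
    (hL : PathList H u v L) {i : ℕ} (hi : i < L.length) :
    PathList H u L[i] (L.take (i+1)) := by
  obtain ⟨h1, h2, h3⟩ := hL
  refine ⟨?_, ?_, h3.take _⟩
  · cases L with
    | nil => simp at hi
    | cons a t => simp at h1; simp [h1]
  · rw [List.getLast?_eq_getElem?, List.length_take]
    have h4 : (i + 1) ⊓ L.length = i + 1 := by omega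
    rw [h4, show i+1-1 = i from rfl]
    simp only [List.getElem?_take]
    rw [if_pos (by omega), List.getElem?_eq_getElem hi]

lemma walk_pathList {H : SimpleGraph V} {x y : V} (p : H.Walk x y) :
    ∃ L, PathList H x y L := by
  refine ⟨p.support, ?_, ?_, p.isChain_adj_support⟩
  · rw [p.support_eq_cons]; rfl
  · rw [← List.head?_reverse, ← SimpleGraph.Walk.support_reverse,
      (p.reverse).support_eq_cons]; rfl

lemma reachable_pathList {H : SimpleGraph V} {u v : V} (h : H.Reachable u v) :
    ∃ L, PathList H u v L := by
  obtain ⟨p⟩ := h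
  exact walk_pathList p

/-- A geodesic: a walk-list of minimal length is an induced path. -/
lemma exists_geodesic {H : SimpleGraph V} {u v : V} (h : H.Reachable u v) :
    ∃ L : List V, PathList H u v L ∧ L.Nodup ∧
      ∀ (i j : ℕ) (hi : i < L.length) (hj : j < L.length),
        (H.Adj L[i] L[j] ↔ (i+1 = j ∨ j+1 = i)) := by
  have hex : ∃ n : ℕ, ∃ L, PathList H u v L ∧ L.length = n := by
    obtain ⟨L, hL⟩ := reachable_pathList h
    exact ⟨L.length, L, hL, rfl⟩
  classical
  obtain ⟨L, hL, hlen⟩ := Nat.find_spec hex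
  have hmin : ∀ L', PathList H u v L' → L.length ≤ L'.length := by
    intro L' hL'
    rw [hlen]
    exact Nat.find_le ⟨L', hL', rfl⟩
  -- adjacency implies consecutive, for i < j
  have key : ∀ (i j : ℕ) (hij : i < j) (hj : j < L.length),
      H.Adj (L[i]'(lt_trans hij hj)) L[j] → i + 1 = j := by
    intro i j hij hj hadj
    by_contra hne
    have h2 : i + 1 < j := by omega
    obtain ⟨hP, hlen'⟩ := pathList_splice hL hij hj hadj
    have := hmin _ hP
    omega
  -- Nodup
  have hnd : L.Nodup := by
    by_contra hnd
    rw [List.nodup_iff_getElem?_ne_getElem?] at hnd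
    push_neg at hnd
    obtain ⟨i, j, hij, hj, he⟩ := hnd
    rw [List.getElem?_eq_getElem (lt_trans hij hj), List.getElem?_eq_getElem hj] at he
    rw [Option.some_inj] at he
    rcases Nat.lt_or_ge (j+1) L.length with hj1 | hj1
    · -- use edge j → j+1
      have hadj : H.Adj (L[i]'(lt_trans hij hj)) (L[j+1]'hj1) := by
        rw [he]
        have := List.isChain_iff_getElem.mp hL.2.2 j (by omega)
        simpa using this
      have := key i (j+1) (by omega) hj1 hadj
      omega
    · -- j is the last index, so L[i] = v; take prefix
      have hj2 : j = L.length - 1 := by omega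
      have hP := pathList_take hL (lt_trans hij hj)
      have h2 := hL.2.1
      rw [List.getLast?_eq_getElem?, ← hj2] at h2
      rw [List.getElem?_eq_getElem hj] at h2
      have hlast : (L[i]'(lt_trans hij hj)) = v := by
        rw [he]; exact Option.some_inj.mp h2
      rw [hlast] at hP
      have := hmin _ hP
      rw [List.length_take] at this
      omega
  refine ⟨L, hL, hnd, ?_⟩
  intro i j hi hj
  constructor
  · intro hadj
    rcases Nat.lt_trichotomy i j with hij | rfl | hij
    · exact Or.inl (key i j hij hj hadj)
    · exact absurd hadj (H.irrefl)
    · exact Or.inr (key j i hij hi hadj.symm)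
  · rintro (rfl | hc)
    · have := List.isChain_iff_getElem.mp hL.2.2 i (by omega)
      simpa using this
    · have h5 := List.isChain_iff_getElem.mp hL.2.2 j (by omega)
      have h6 : H.Adj (L[j]'hj) (L[j+1]'(by omega)) := by simpa using h5
      have h7 : H.Adj (L[j]'hj) (L[i]'hi) := by
        convert h6 using 2
        omega
      exact h7.symm

/-- A simple graph is chordal if it has no induced cycle of length at least `4`
(an induced cycle is an induced-subgraph embedding of a cycle graph). -/
def Chordal {V : Type} (G : SimpleGraph V) : Prop :=
  ∀ m : ℕ, 4 ≤ m → IsEmpty (SimpleGraph.cycleGraph m ↪g G)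

lemma fin_sub_val_eq_one {m : ℕ} (hm : 2 ≤ m) (i j : Fin m) :
    ((i - j : Fin m)).val = 1 ↔ (j.val + 1 = i.val ∨ (i.val = 0 ∧ j.val + 1 = m)) := by
  have hi := i.isLt
  have hj := j.isLt
  rw [Fin.sub_def]
  dsimp
  rcases le_or_gt j.val i.val with h | h
  · have e : (m - j.val + i.val) = (i.val - j.val) + m := by omega
    rw [e, Nat.add_mod_right, Nat.mod_eq_of_lt (by omega)]
    omega
  · rw [Nat.mod_eq_of_lt (by omega)]
    omega

lemma chordal_no_cycle_list {G : SimpleGraph V} (hG : Chordal G) (L : List V)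
    (hm : 4 ≤ L.length) (hnd : L.Nodup)
    (hadj : ∀ (i j : ℕ) (hi : i < L.length) (hj : j < L.length),
      G.Adj L[i] L[j] ↔
        (i+1 = j ∨ j+1 = i ∨ (i = 0 ∧ j+1 = L.length) ∨ (j = 0 ∧ i+1 = L.length))) :
    False := by
  refine (hG L.length hm).false ⟨⟨L.get, List.nodup_iff_injective_get.mp hnd⟩, ?_⟩
  intro i j
  dsimp
  rw [SimpleGraph.cycleGraph_adj']
  rw [hadj i.val j.val i.isLt j.isLt, fin_sub_val_eq_one (by omega), fin_sub_val_eq_one (by omega)]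
  tauto

/-- The graph `G` with all vertices of `S` removed (isolated). -/
def out (G : SimpleGraph V) (S : Finset V) : SimpleGraph V where
  Adj u v := G.Adj u v ∧ u ∉ S ∧ v ∉ S
  symm := ⟨fun u v ⟨h1, h2, h3⟩ => ⟨h1.symm, h3, h2⟩⟩
  loopless := ⟨fun u ⟨h1, _⟩ => G.loopless.irrefl u h1⟩

lemma out_walk_not_mem {G : SimpleGraph V} {S : Finset V} :
    ∀ {x y : V}, (out G S).Walk x y → x ∉ S → y ∉ S := by
  intro x y p
  induction p with
  | nil => exact id
  | cons h _ ih => exact fun _ => ih h.2.2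

lemma out_reach_not_mem {G : SimpleGraph V} {S : Finset V} {x y : V}
    (h : (out G S).Reachable x y) (hx : x ∉ S) : y ∉ S := by
  obtain ⟨p⟩ := h
  exact out_walk_not_mem p hx

/-- Crossing lemma: if a walk avoiding `S.erase s` goes from the reachability class
of `a` (in `out G S`) to outside it, then `s` has a `G`-neighbor in that class. -/
lemma out_cross [DecidableEq V] {G : SimpleGraph V} {S : Finset V} {s : V} {a : V} :
    ∀ {x y : V}, (out G (S.erase s)).Walk x y → x ∉ S →
      (out G S).Reachable a x → ¬ (out G S).Reachable a y →
      ∃ w, G.Adj s w ∧ w ∉ S ∧ (out G S).Reachable a w := by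
  intro x y p
  induction p with
  | nil => exact fun hx hra hrb => absurd hra hrb
  | @cons u u' w h p ih =>
    intro hu hra hrb
    by_cases hus : u' = s
    · exact ⟨u, hus ▸ h.1.symm, hu, hra⟩
    · have hu' : u' ∉ S := by
        intro hmem
        exact h.2.2 (Finset.mem_erase.mpr ⟨hus, hmem⟩)
      have hadj : (out G S).Adj u u' := ⟨h.1, hu, hu'⟩
      exact ih hu' (hra.trans hadj.reachable) hrb

/-- Transfer reachability between graphs along a closed set. -/
lemma reach_transfer {H H' : SimpleGraph V} {A : Set V}
    (hclosed : ∀ u v, u ∈ A → H.Adj u v → v ∈ A)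
    (hsub : ∀ u v, u ∈ A → v ∈ A → H.Adj u v → H'.Adj u v) :
    ∀ {u v : V}, H.Walk u v → u ∈ A → H'.Reachable u v := by
  intro u v p
  induction p with
  | nil => exact fun _ => Reachable.refl _
  | @cons x x' y h p ih =>
    intro hx
    have hx' : x' ∈ A := hclosed _ _ hx h
    exact ((hsub _ _ hx hx' h).reachable).trans (ih hx')

/-- The graph on `A ∪ {x, y}` induced by `G`, minus the edge (if any) between `x` and `y`. -/
def sideGraph (G : SimpleGraph V) (A : Set V) (x y : V) : SimpleGraph V where
  Adj u v := G.Adj u v ∧ (u ∈ A ∨ v ∈ A) ∧ (u ∈ A ∨ u = x ∨ u = y) ∧ (v ∈ A ∨ v = x ∨ v = y)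
  symm := ⟨fun u v ⟨h1, h2, h3, h4⟩ => ⟨h1.symm, h2.symm, h4, h3⟩⟩
  loopless := ⟨fun u ⟨h1, _⟩ => G.loopless.irrefl u h1⟩

lemma getElem_nat_congr {α : Type*} (L : List α) {i j : ℕ} (h : i = j) (hi : i < L.length) :
    L[i] = L[j]'(h ▸ hi) := by subst h; rfl

/-- Extract an induced path (w.r.t. `G`!) from `x` to `y` whose interior lies in `A`. -/
lemma side_path {G : SimpleGraph V} {A : Set V} {x y : V}
    (hxA : x ∉ A) (hyA : y ∉ A) (hxy : x ≠ y) (hnadj : ¬ G.Adj x y)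
    (hreach : (sideGraph G A x y).Reachable x y) :
    ∃ L : List V, 3 ≤ L.length ∧ L.Nodup ∧
      (∀ (i : ℕ) (hi : i < L.length), 0 < i → i < L.length - 1 → L[i] ∈ A) ∧
      (∃ h0 : 0 < L.length, L[0] = x) ∧
      (∃ hl : L.length - 1 < L.length, L[L.length - 1] = y) ∧
      (∀ (i j : ℕ) (hi : i < L.length) (hj : j < L.length),
        G.Adj L[i] L[j] ↔ (i + 1 = j ∨ j + 1 = i)) := by
  obtain ⟨L, ⟨hh, hl, hchain⟩, hnd, hiff⟩ := exists_geodesic hreach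
  have hne : L ≠ [] := by rintro rfl; simp at hh
  have hlen0 : 0 < L.length := List.length_pos_iff.mpr hne
  have h0 : L[0] = x := by
    rw [← List.head_eq_getElem hne]
    rw [List.head?_eq_head hne] at hh
    exact Option.some_inj.mp hh
  have hlast : L[L.length - 1] = y := by
    rw [← List.getLast_eq_getElem hne]
    rw [List.getLast?_eq_getLast hne] at hl
    exact Option.some_inj.mp hl
  -- length at least 3
  have hlen2 : 2 ≤ L.length := by
    rcases Nat.lt_or_ge L.length 2 with h | h
    · exfalso
      have h1 : L.length = 1 := by omega
      have e : L[L.length - 1]'(by omega) = L[0] := getElem_nat_congr L (by omega) _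
      rw [e, h0] at hlast
      exact hxy hlast
    · exact h
  have hlen3 : 3 ≤ L.length := by
    rcases Nat.lt_or_ge L.length 3 with h | h
    · exfalso
      have h2 : L.length = 2 := by omega
      have hadj := (hiff 0 1 (by omega) (by omega)).mpr (Or.inl rfl)
      have e : L[L.length - 1]'(by omega) = L[1]'(by omega) := getElem_nat_congr L (by omega) _
      rw [e] at hlast
      have hadj' := hadj.1
      rw [h0, hlast] at hadj'
      exact hnadj hadj'
    · exact h
  -- nodup-based distinctness of positions
  have hinj : ∀ (i j : ℕ) (hi : i < L.length) (hj : j < L.length), L[i] = L[j] → i = j := by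
    intro i j hi hj he
    by_contra hne'
    rw [List.nodup_iff_getElem?_ne_getElem?] at hnd
    rcases Nat.lt_or_ge i j with h | h
    · exact hnd i j h hj (by rw [List.getElem?_eq_getElem hi, List.getElem?_eq_getElem hj, he])
    · exact hnd j i (by omega) hi
        (by rw [List.getElem?_eq_getElem hi, List.getElem?_eq_getElem hj, he])
  have hmem : ∀ (i : ℕ) (hi : i < L.length), L[i] ∈ A ∨ L[i] = x ∨ L[i] = y := by
    intro i hi
    rcases Nat.lt_or_ge i (L.length - 1) with h | h
    · have hadj := (hiff i (i+1) hi (by omega)).mpr (Or.inl rfl)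
      exact hadj.2.2.1
    · have e : L[i] = L[L.length - 1]'(by omega) := getElem_nat_congr L (by omega) _
      rw [e, hlast]; right; right; rfl
  have hint : ∀ (i : ℕ) (hi : i < L.length), 0 < i → i < L.length - 1 → L[i] ∈ A := by
    intro i hi h1 h2
    rcases hmem i hi with h | h | h
    · exact h
    · exfalso; rw [← h0] at h; have := hinj i 0 hi hlen0 h; omega
    · exfalso; rw [← hlast] at h; have := hinj i (L.length - 1) hi (by omega) h; omega
  refine ⟨L, hlen3, hnd, hint, ⟨hlen0, h0⟩, ⟨by omega, hlast⟩, ?_⟩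
  intro i j hi hj
  constructor
  · intro hadj
    -- if one of them is interior, lift to sideGraph adjacency
    have hij : i ≠ j := by
      intro h; subst h; exact G.irrefl hadj
    by_cases hcase : (0 < i ∧ i < L.length - 1) ∨ (0 < j ∧ j < L.length - 1)
    · have hSide : (sideGraph G A x y).Adj L[i] L[j] := by
        refine ⟨hadj, ?_, hmem i hi, hmem j hj⟩
        rcases hcase with ⟨h1, h2⟩ | ⟨h1, h2⟩
        · exact Or.inl (hint i hi h1 h2)
        · exact Or.inr (hint j hj h1 h2)
      exact (hiff i j hi hj).mp hSide
    · exfalso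
      push_neg at hcase
      -- both endpoints are x or y; the only candidate pair is (x,y), not adjacent
      have hi' : i = 0 ∨ i = L.length - 1 := by omega
      have hj' : j = 0 ∨ j = L.length - 1 := by omega
      have : G.Adj x y := by
        rcases hi' with rfl | hi' <;> rcases hj' with rfl | hj'
        · omega
        · have ej : L[j] = y := by
            rw [getElem_nat_congr L hj' hj]; exact hlast
          rw [h0, ej] at hadj; exact hadj
        · have ei : L[i] = y := by
            rw [getElem_nat_congr L hi' hi]; exact hlast
          rw [ei, h0] at hadj; exact hadj.symm
        · exfalso; rw [hi', hj'] at hij; omega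
      exact hnadj this
  · intro h
    exact ((hiff i j hi hj).mpr h).1

lemma sep_clique [DecidableEq V] {G : SimpleGraph V} (hG : Chordal G) {a b : V} {S : Finset V}
    (ha : a ∉ S) (hb : b ∉ S) (hnr : ¬ (out G S).Reachable a b)
    (hnbr : ∀ s ∈ S, (∃ w, G.Adj s w ∧ (out G S).Reachable a w) ∧
                     (∃ w, G.Adj s w ∧ (out G S).Reachable b w)) :
    ∀ x ∈ S, ∀ y ∈ S, x ≠ y → G.Adj x y := by
  intro x hx y hy hxy
  by_contra hnadj
  set A : Set V := {u | (out G S).Reachable a u} with hA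
  set B : Set V := {u | (out G S).Reachable b u} with hB
  have hAS : ∀ u, u ∈ A → u ∉ S := fun u hu => out_reach_not_mem hu ha
  have hBS : ∀ u, u ∈ B → u ∉ S := fun u hu => out_reach_not_mem hu hb
  have hAB : ∀ u, u ∈ A → u ∈ B → False := fun u hu hv => hnr (hu.trans hv.symm)
  have hxA : x ∉ A := fun h => hAS x h hx
  have hyA : y ∉ A := fun h => hAS y h hy
  have hxB : x ∉ B := fun h => hBS x h hx
  have hyB : y ∉ B := fun h => hBS y h hy
  have hAclosed : ∀ u v, u ∈ A → (out G S).Adj u v → v ∈ A :=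
    fun u v hu h => hu.trans h.reachable
  have hBclosed : ∀ u v, u ∈ B → (out G S).Adj u v → v ∈ B :=
    fun u v hu h => hu.trans h.reachable
  have cross : ∀ u v, u ∈ A → v ∈ B → ¬ G.Adj u v := by
    intro u v hu hv hadj
    exact hnr ((hu.trans (SimpleGraph.Adj.reachable ⟨hadj, hAS u hu, hBS v hv⟩)).trans hv.symm)
  obtain ⟨⟨ax, haxadj, haxr⟩, ⟨bx, hbxadj, hbxr⟩⟩ := hnbr x hx
  obtain ⟨⟨ay, hayadj, hayr⟩, ⟨by', hbyadj, hbyr⟩⟩ := hnbr y hy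
  have hreachA : (sideGraph G A x y).Reachable x y := by
    have h1 : (sideGraph G A x y).Adj x ax :=
      ⟨haxadj, Or.inr haxr, Or.inr (Or.inl rfl), Or.inl haxr⟩
    have h2 : (sideGraph G A x y).Reachable ax ay := by
      obtain ⟨p⟩ := haxr.symm.trans hayr
      exact reach_transfer (H' := sideGraph G A x y) hAclosed
        (fun u v hu hv h => ⟨h.1, Or.inl hu, Or.inl hu, Or.inl hv⟩) p haxr
    have h3 : (sideGraph G A x y).Adj ay y :=
      ⟨hayadj.symm, Or.inl hayr, Or.inl hayr, Or.inr (Or.inr rfl)⟩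
    exact (h1.reachable.trans h2).trans h3.reachable
  have hreachB : (sideGraph G B y x).Reachable y x := by
    have h1 : (sideGraph G B y x).Adj y by' :=
      ⟨hbyadj, Or.inr hbyr, Or.inr (Or.inl rfl), Or.inl hbyr⟩
    have h2 : (sideGraph G B y x).Reachable by' bx := by
      obtain ⟨p⟩ := hbyr.symm.trans hbxr
      exact reach_transfer (H' := sideGraph G B y x) hBclosed
        (fun u v hu hv h => ⟨h.1, Or.inl hu, Or.inl hu, Or.inl hv⟩) p hbyr
    have h3 : (sideGraph G B y x).Adj bx x :=
      ⟨hbxadj.symm, Or.inl hbxr, Or.inl hbxr, Or.inr (Or.inr rfl)⟩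
    exact (h1.reachable.trans h2).trans h3.reachable
  obtain ⟨LA, hA3, hAnd, hAint, ⟨hA0l, hA0⟩, ⟨hAll, hAlast⟩, hAiff⟩ :=
    side_path hxA hyA hxy hnadj hreachA
  obtain ⟨LB, hB3, hBnd, hBint, ⟨hB0l, hB0⟩, ⟨hBll, hBlast⟩, hBiff⟩ :=
    side_path hyB hxB (Ne.symm hxy) (fun h => hnadj h.symm) hreachB
  set bs := (LB.drop 1).dropLast with hbs
  have hbs_len : bs.length = LB.length - 2 := by
    rw [hbs, List.length_dropLast, List.length_drop]
    omega
  have hbs_get : ∀ (t : ℕ) (ht : t < bs.length), bs[t] = LB[t+1]'(by omega) := by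
    intro t ht
    simp only [hbs, List.getElem_dropLast, List.getElem_drop]
    exact getElem_nat_congr LB (by omega) _
  have hbs_B : ∀ (t : ℕ) (ht : t < bs.length), bs[t] ∈ B := by
    intro t ht
    rw [hbs_get t ht]
    exact hBint (t+1) (by omega) (by omega) (by omega)
  have hbs_nd : bs.Nodup :=
    hBnd.sublist ((List.dropLast_sublist _).trans (List.drop_sublist 1 LB))
  set L := LA ++ bs with hL
  have hmlen : L.length = LA.length + bs.length := by rw [hL, List.length_append]
  have hL_left : ∀ (i : ℕ) (hi : i < LA.length), L[i]'(by omega) = LA[i] := by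
    intro i hi
    simp only [hL]
    exact List.getElem_append_left hi
  have hL_right : ∀ (i : ℕ) (h1 : LA.length ≤ i) (h2 : i < L.length),
      L[i] = LB[i - LA.length + 1]'(by omega) := by
    intro i h1 h2
    simp only [hL]
    rw [List.getElem_append_right h1]
    exact hbs_get _ (by omega)
  have hnodup : L.Nodup := by
    rw [hL]
    refine List.Nodup.append hAnd hbs_nd ?_
    · intro z hzA hzbs
      obtain ⟨i, hi, rfl⟩ := List.mem_iff_getElem.mp hzA
      obtain ⟨t, ht, he⟩ := List.mem_iff_getElem.mp hzbs
      have hzB : LA[i] ∈ B := he ▸ hbs_B t ht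
      have hAmem : LA[i] ∈ A ∨ LA[i] = x ∨ LA[i] = y := by
        rcases Nat.lt_or_ge i 1 with h | h
        · right; left; rw [getElem_nat_congr LA (show i = 0 by omega)]; exact hA0
        · rcases Nat.lt_or_ge i (LA.length - 1) with h' | h'
          · exact Or.inl (hAint i hi (by omega) h')
          · right; right
            rw [getElem_nat_congr LA (show i = LA.length - 1 by omega)]; exact hAlast
      rcases hAmem with h | h | h
      · exact hAB _ h hzB
      · exact hxB (h ▸ hzB)
      · exact hyB (h ▸ hzB)
  have hkey : ∀ (i j : ℕ) (hij : i < j) (hj : j < L.length),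
      (G.Adj (L[i]'(by omega)) L[j] ↔
        (i+1 = j ∨ j+1 = i ∨ (i = 0 ∧ j+1 = L.length) ∨ (j = 0 ∧ i+1 = L.length))) := by
    intro i j hij hj
    rcases Nat.lt_or_ge j LA.length with hcase | hcase
    · rw [hL_left i (by omega), hL_left j hcase, hAiff i j (by omega) hcase]
      omega
    · rcases Nat.lt_or_ge i LA.length with hcase2 | hcase2
      · rcases Nat.lt_or_ge i 1 with h0 | h0
        · -- i = 0 : vertex x = LB[LB.length - 1]
          have e0 : L[i]'(by omega) = LB[LB.length - 1]'(by omega) := by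
            rw [hL_left i (by omega), getElem_nat_congr LA (show i = 0 by omega), hA0,
              ← hBlast]
          rw [e0, hL_right j hcase hj,
            hBiff (LB.length - 1) (j - LA.length + 1) (by omega) (by omega)]
          omega
        · rcases Nat.lt_or_ge i (LA.length - 1) with h1 | h1
          · -- i interior of LA : in A, j in bs : in B, no adjacency
            have huA : LA[i]'(by omega) ∈ A := hAint i (by omega) (by omega) h1
            have hvB : L[j] ∈ B := by
              rw [hL_right j hcase hj, ← hbs_get (j - LA.length) (by omega)]
              exact hbs_B _ (by omega)
            refine iff_of_false ?_ (by omega)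
            rw [hL_left i (by omega)]
            exact cross _ _ huA hvB
          · -- i = LA.length - 1 : vertex y = LB[0]
            have e0 : L[i]'(by omega) = LB[0]'(by omega) := by
              rw [hL_left i (by omega),
                getElem_nat_congr LA (show i = LA.length - 1 by omega), hAlast, ← hB0]
            rw [e0, hL_right j hcase hj,
              hBiff 0 (j - LA.length + 1) (by omega) (by omega)]
            omega
      · rw [hL_right i hcase2 (by omega), hL_right j hcase hj,
          hBiff (i - LA.length + 1) (j - LA.length + 1) (by omega) (by omega)]
        omega
  have hadj : ∀ (i j : ℕ) (hi : i < L.length) (hj : j < L.length),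
      G.Adj L[i] L[j] ↔
        (i+1 = j ∨ j+1 = i ∨ (i = 0 ∧ j+1 = L.length) ∨ (j = 0 ∧ i+1 = L.length)) := by
    intro i j hi hj
    rcases Nat.lt_trichotomy i j with h | rfl | h
    · exact hkey i j h hj
    · exact iff_of_false (G.irrefl) (by omega)
    · rw [G.adj_comm, hkey j i h hi]
      omega
  exact chordal_no_cycle_list hG L (by omega) hnodup hadj

def Simplicial (G : SimpleGraph V) (v : V) : Prop :=
  ∀ a ∈ G.neighborSet v, ∀ b ∈ G.neighborSet v, a ≠ b → G.Adj a b

lemma exists_simplicial_side [Fintype V] {n : ℕ}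
    (IH : ∀ (W : Type) [Fintype W] (G' : SimpleGraph W), Fintype.card W ≤ n → Chordal G' →
      ∀ p q : W, p ≠ q → ¬G'.Adj p q →
        ∃ u v : W, u ≠ v ∧ ¬G'.Adj u v ∧ Simplicial G' u ∧ Simplicial G' v)
    {G : SimpleGraph V} (hcard : Fintype.card V ≤ n + 1) (hG : Chordal G)
    {S : Finset V} {a b : V} (ha : a ∉ S) (hb : b ∉ S)
    (hnr : ¬ (out G S).Reachable a b)
    (hclique : ∀ x ∈ S, ∀ y ∈ S, x ≠ y → G.Adj x y) :
    ∃ u, (out G S).Reachable a u ∧ Simplicial G u := by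
  classical
  set A : Set V := {u | (out G S).Reachable a u} with hA
  have hAS : ∀ u, u ∈ A → u ∉ S := fun u hu => out_reach_not_mem hu ha
  set W : Set V := A ∪ ↑S with hW
  have hbW : b ∉ W := by
    rintro (h | h)
    · exact hnr h
    · exact hb h
  have hcard' : Fintype.card ↥W ≤ n := by
    have hlt : Fintype.card ↥W < Fintype.card V := by
      refine Fintype.card_lt_of_injective_of_notMem Subtype.val Subtype.val_injective (b := b) ?_
      rw [Subtype.range_val]
      exact hbW
    omega
  set G' : SimpleGraph ↥W := G.induce W with hG'def
  have hG' : Chordal G' := by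
    intro m hm
    exact ⟨fun f => (hG m hm).false ((SimpleGraph.Embedding.induce W).comp f)⟩
  have hnbW : ∀ u, u ∈ A → ∀ w, G.Adj u w → w ∈ W := by
    intro u hu w h
    by_cases hw : w ∈ S
    · exact Or.inr hw
    · exact Or.inl (hu.trans (SimpleGraph.Adj.reachable ⟨h, hAS u hu, hw⟩))
  have htrans : ∀ (u : V) (hu : u ∈ A), Simplicial G' ⟨u, Or.inl hu⟩ → Simplicial G u := by
    intro u hu hsimp w1 hw1 w2 hw2 hne
    have haw1 : G.Adj u w1 := hw1
    have haw2 : G.Adj u w2 := hw2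
    have m1 : w1 ∈ W := hnbW u hu w1 haw1
    have m2 : w2 ∈ W := hnbW u hu w2 haw2
    have : G'.Adj ⟨w1, m1⟩ ⟨w2, m2⟩ := by
      refine hsimp ⟨w1, m1⟩ ?_ ⟨w2, m2⟩ ?_ ?_
      · exact haw1
      · exact haw2
      · intro h; exact hne (congrArg Subtype.val h)
    exact this
  by_cases hcomp : ∀ p q : ↥W, p ≠ q → G'.Adj p q
  · exact ⟨a, Reachable.refl a,
      htrans a (Reachable.refl a) (fun p _ q _ hne => hcomp p q hne)⟩
  · push_neg at hcomp
    obtain ⟨p, q, hpq, hnadjpq⟩ := hcomp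
    obtain ⟨u, v, huv, hnadjuv, hsu, hsv⟩ := IH ↥W G' hcard' hG' p q hpq hnadjpq
    have hnot_both : ¬ (↑u ∈ S ∧ ↑v ∈ S) := by
      rintro ⟨h1, h2⟩
      have hne : (u : V) ≠ (v : V) := fun h => huv (Subtype.ext h)
      exact hnadjuv (hclique _ h1 _ h2 hne)
    have : (↑u ∈ A) ∨ (↑v ∈ A) := by
      rcases u.2 with h | h
      · exact Or.inl h
      · rcases v.2 with h' | h'
        · exact Or.inr h'
        · exact absurd ⟨h, h'⟩ hnot_both
    rcases this with h | h
    · refine ⟨↑u, h, htrans _ h ?_⟩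
      have he : (⟨↑u, Or.inl h⟩ : ↥W) = u := Subtype.ext rfl
      rw [he]; exact hsu
    · refine ⟨↑v, h, htrans _ h ?_⟩
      have he : (⟨↑v, Or.inl h⟩ : ↥W) = v := Subtype.ext rfl
      rw [he]; exact hsv

lemma dirac_aux (n : ℕ) : ∀ {V : Type} [Fintype V] (G : SimpleGraph V),
    Fintype.card V ≤ n → Chordal G → ∀ a b : V, a ≠ b → ¬ G.Adj a b →
    ∃ u v : V, u ≠ v ∧ ¬G.Adj u v ∧ Simplicial G u ∧ Simplicial G v := by
  induction n with
  | zero =>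
    intro V _ G hcard _ a _ _ _
    have := Fintype.card_pos_iff.mpr ⟨a⟩
    omega
  | succ n IH =>
    intro V _ G hcard hG a b hab hnadj
    classical
    have hsep0 : ∃ (S : Finset V), a ∉ S ∧ b ∉ S ∧ ¬ (out G S).Reachable a b := by
      refine ⟨(Finset.univ.erase b).erase a, by simp, ?_, ?_⟩
      · simp [Finset.mem_erase, hab]
      · rintro ⟨p⟩
        cases p with
        | nil => exact hab rfl
        | cons h q =>
          rename_i w
          have hw := h.2.2
          simp only [Finset.mem_erase, Finset.mem_univ, and_true, not_and, not_not] at hw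
          by_cases hwa : w = a
          · exact G.irrefl (hwa ▸ h.1)
          · exact hnadj ((hw hwa) ▸ h.1)
    have hexk : ∃ k : ℕ, ∃ S : Finset V,
        (a ∉ S ∧ b ∉ S ∧ ¬ (out G S).Reachable a b) ∧ S.card = k := by
      obtain ⟨S, hS⟩ := hsep0
      exact ⟨S.card, S, hS, rfl⟩
    obtain ⟨S, ⟨ha, hb, hnr⟩, hScard⟩ := Nat.find_spec hexk
    have hmin : ∀ (S' : Finset V), (a ∉ S' ∧ b ∉ S' ∧ ¬(out G S').Reachable a b) →
        S.card ≤ S'.card := by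
      intro S' hS'
      rw [hScard]
      exact Nat.find_le ⟨S', hS', rfl⟩
    have hnbr : ∀ s ∈ S, (∃ w, G.Adj s w ∧ (out G S).Reachable a w) ∧
        (∃ w, G.Adj s w ∧ (out G S).Reachable b w) := by
      intro s hs
      have hcarderase : (S.erase s).card < S.card := Finset.card_erase_lt_of_mem hs
      have hr' : (out G (S.erase s)).Reachable a b := by
        by_contra hsep'
        have := hmin (S.erase s)
          ⟨fun h => ha (Finset.mem_of_mem_erase h),
           fun h => hb (Finset.mem_of_mem_erase h), hsep'⟩
        omega
      obtain ⟨p⟩ := hr'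
      constructor
      · obtain ⟨w, h1, _, h3⟩ := out_cross p ha (Reachable.refl a) hnr
        exact ⟨w, h1, h3⟩
      · obtain ⟨w, h1, _, h3⟩ := out_cross p.reverse hb (Reachable.refl b)
          (fun h => hnr h.symm)
        exact ⟨w, h1, h3⟩
    have hclique := sep_clique hG ha hb hnr hnbr
    have IH' : ∀ (W : Type) [Fintype W] (G' : SimpleGraph W), Fintype.card W ≤ n →
        Chordal G' → ∀ p q : W, p ≠ q → ¬G'.Adj p q →
        ∃ u v : W, u ≠ v ∧ ¬G'.Adj u v ∧ Simplicial G' u ∧ Simplicial G' v :=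
      fun W _ G' => IH G'
    obtain ⟨u, hru, hsu⟩ := exists_simplicial_side IH' hcard hG ha hb hnr hclique
    have hclique' : ∀ x ∈ S, ∀ y ∈ S, x ≠ y → G.Adj x y := hclique
    obtain ⟨v, hrv, hsv⟩ := exists_simplicial_side IH' hcard hG hb ha
      (fun h => hnr h.symm) hclique'
    refine ⟨u, v, ?_, ?_, hsu, hsv⟩
    · rintro rfl
      exact hnr (hru.trans hrv.symm)
    · intro hadj
      have hu' : u ∉ S := out_reach_not_mem hru ha
      have hv' : v ∉ S := out_reach_not_mem hrv hb
      exact hnr ((hru.trans (SimpleGraph.Adj.reachable ⟨hadj, hu', hv'⟩)).trans hrv.symm)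

theorem chordal_exists_simplicial_vertex {V : Type} [Fintype V] [Nonempty V]
    (G : SimpleGraph V) (hG : Chordal G) :
    ∃ v : V, ∀ a ∈ G.neighborSet v, ∀ b ∈ G.neighborSet v, a ≠ b → G.Adj a b := by
  by_cases h : ∃ a b : V, a ≠ b ∧ ¬ G.Adj a b
  · obtain ⟨a, b, hab, hnadj⟩ := h
    obtain ⟨u, _, _, _, hsu, _⟩ :=
      dirac_aux (Fintype.card V) G le_rfl hG a b hab hnadj
    exact ⟨u, hsu⟩
  · push_neg at h
    obtain ⟨v⟩ := ‹Nonempty V›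
    exact ⟨v, fun x _ y _ hxy => h x y hxy⟩
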